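/- Let α be a partial action of a monoid M on a set X, and let Y = (M × X)/≃ be the quotient by the equivalence relation ≃ generated by (uv, x) ∼ (u, v·x) whenever v·x is defined. Then the map i: X → Y, i(x) = [e, x], is injective. -/
import Mathlib


/-- The generating relation `(u*v, x) ∼ (u, v·x)` (whenever `v·x` is defined)
on `M × X`, whose generated equivalence defines the globalization. -/
def Sim {M X : Type*} [Monoid M] (α : M → X → Option X) :
    M × X → M × X → Prop := fun p q =>
  ∃ u v : M, p.1 = u * v ∧ q.1 = u ∧ α v p.2 = some q.2

/-- The canonical map `i : X → Y = (M × X)/≃`, `i x = [1, x]`, into the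
globalization of a partial monoid action is injective. -/
theorem stmt_3 {M X : Type*} [Monoid M] (α : M → X → Option X)
    (hunit : ∀ x, α 1 x = some x)
    (hmul : ∀ (u v : M) (x y : X), α v x = some y → α (u * v) x = α u y)
    (x y : X) (h : Relation.EqvGen (Sim α) (1, x) (1, y)) : x = y := by
  have key : ∀ p q : M × X, Relation.EqvGen (Sim α) p q → α p.1 p.2 = α q.1 q.2 := by
    intro p q h
    induction h with
    | rel p q hpq =>
        obtain ⟨u, v, h1, h2, h3⟩ := hpq
        rw [h1, h2, hmul u v p.2 q.2 h3]
    | refl => rfl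
    | symm _ _ _ ih => exact ih.symm
    | trans _ _ _ _ _ ih1 ih2 => exact ih1.trans ih2
  have := key _ _ h
  simp only [hunit] at this
  exact Option.some.inj this
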